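/- There exists a matrix g ∈ SL(3, ℤ) whose Zariski closure of the cyclic group ⟨g⟩ in SL(3, ℝ) is a maximal ℝ-split torus; more concretely, there exists g ∈ SL(3, ℤ) that is diagonalizable over ℝ with three distinct real eigenvalues λ₁ > λ₂ > λ₃ > 0, none of which equals 1, such that λ₁, λ₂, λ₃ are multiplicatively independent modulo the relation λ₁λ₂λ₃ = 1 (i.e., λ₁^{m₁} λ₂^{m₂} λ₃^{m₃} = 1 with mᵢ ∈ ℤ implies m₁ = m₂ = m₃). -/

import Mathlib

namespace Stmt4Aux
open Polynomial Real

noncomputable def pZ : ℤ[X] := X^3 - C 6 * X^2 + C 9 * X - 1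
noncomputable def pQ : ℚ[X] := X^3 - C 6 * X^2 + C 9 * X - 1

theorem pmap : pZ.map (Int.castRingHom (ZMod 2)) = X^3 + X - 1 := by
  unfold pZ
  simp only [Polynomial.map_sub, Polynomial.map_add, Polynomial.map_pow, Polynomial.map_mul,
    Polynomial.map_one, Polynomial.map_X, Polynomial.map_C, map_intCast]
  norm_num
  rw [show (6:ZMod 2) = 0 from by decide, show (9:ZMod 2) = 1 from by decide]
  simp

theorem pZ_monic : pZ.Monic := by unfold pZ; monicity!

theorem pZ_irr : Irreducible pZ := by
  apply pZ_monic.irreducible_of_irreducible_map (Int.castRingHom (ZMod 2))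
  rw [pmap]
  have hm : (X^3 + X - 1 : (ZMod 2)[X]).Monic := by monicity!
  have hd : (X^3 + X - 1 : (ZMod 2)[X]).natDegree = 3 := by compute_degree!
  rw [hm.irreducible_iff_roots_eq_zero_of_degree_le_three (by omega) (by omega)]
  rw [Multiset.eq_zero_iff_forall_notMem]
  intro a ha
  rw [mem_roots hm.ne_zero, IsRoot] at ha
  simp at ha
  exact (by decide : ∀ a : ZMod 2, ¬(a^3+a-1 = 0)) a ha

theorem pQ_irr : Irreducible pQ := by
  have h := (Polynomial.IsPrimitive.Int.irreducible_iff_irreducible_map_cast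
    pZ_monic.isPrimitive).mp pZ_irr
  have : pZ.map (Int.castRingHom ℚ) = pQ := by
    unfold pZ pQ
    simp [Polynomial.map_sub, Polynomial.map_add, Polynomial.map_pow, Polynomial.map_mul,
      Polynomial.map_one, Polynomial.map_X, Polynomial.map_C]
    rw [show (C (6:ℚ)) = (6:ℚ[X]) from map_ofNat C 6, show (C (9:ℚ)) = (9:ℚ[X]) from map_ofNat C 9]
  rwa [this] at h

noncomputable instance : Fact (Irreducible pQ) := ⟨pQ_irr⟩

/-! Real eigenvalues -/

noncomputable def L0 : ℝ := 4 * cos (π/9) ^ 2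
noncomputable def L1 : ℝ := 4 * cos (2*π/9) ^ 2
noncomputable def L2 : ℝ := 4 * cos (4*π/9) ^ 2

lemma cos_2pi3 : cos (2*π/3) = -(1/2) := by
  rw [show (2*π/3 : ℝ) = π - π/3 by ring, Real.cos_pi_sub, Real.cos_pi_div_three]

lemma cubic_of_cos {t : ℝ} (h : cos (6*t) = -(1/2)) :
    (4*cos t^2)^3 - 6*(4*cos t^2)^2 + 9*(4*cos t^2) - 1 = 0 := by
  have h2 : cos (6*t) = 4 * cos (2*t)^3 - 3*cos (2*t) := by
    rw [show (6:ℝ)*t = 3*(2*t) by ring]; exact Real.cos_three_mul (2*t)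
  have h1 : cos (2*t) = 2 * cos t^2 - 1 := Real.cos_two_mul t
  rw [h1] at h2; rw [h] at h2
  linear_combination (-2) * h2

lemma cubic0 : L0^3 - 6*L0^2 + 9*L0 - 1 = 0 :=
  cubic_of_cos (by rw [show 6*(π/9) = 2*π/3 by ring]; exact cos_2pi3)

lemma cubic1 : L1^3 - 6*L1^2 + 9*L1 - 1 = 0 :=
  cubic_of_cos (by
    rw [show 6*(2*π/9) = -(2*π/3) + 2*π by ring, Real.cos_add_two_pi, Real.cos_neg]
    exact cos_2pi3)

lemma cubic2 : L2^3 - 6*L2^2 + 9*L2 - 1 = 0 :=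
  cubic_of_cos (by
    rw [show 6*(4*π/9) = 2*π/3 + 2*π by ring, Real.cos_add_two_pi]
    exact cos_2pi3)

lemma cos_pos_4pi9 : 0 < cos (4*π/9) := by
  apply Real.cos_pos_of_mem_Ioo
  constructor
  · nlinarith [pi_pos]
  · nlinarith [pi_pos]

lemma cos_lt_01 : cos (2*π/9) < cos (π/9) :=
  Real.cos_lt_cos_of_nonneg_of_le_pi (by positivity) (by nlinarith [pi_pos]) (by nlinarith [pi_pos])

lemma cos_lt_12 : cos (4*π/9) < cos (2*π/9) :=
  Real.cos_lt_cos_of_nonneg_of_le_pi (by positivity) (by nlinarith [pi_pos]) (by nlinarith [pi_pos])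

lemma cos_gt_half : 1/2 < cos (π/9) := by
  have := Real.cos_lt_cos_of_nonneg_of_le_pi (by positivity : (0:ℝ) ≤ π/9)
    (by nlinarith [pi_pos] : π/3 ≤ π) (by nlinarith [pi_pos] : π/9 < π/3)
  rwa [Real.cos_pi_div_three] at this

lemma L2_pos : 0 < L2 := by
  have := cos_pos_4pi9; unfold L2; positivity

lemma L12 : L2 < L1 := by
  have h1 := cos_pos_4pi9
  have h2 := cos_lt_12
  unfold L1 L2; nlinarith

lemma L01 : L1 < L0 := by
  have h1 := cos_pos_4pi9
  have h2 := cos_lt_12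
  have h3 := cos_lt_01
  unfold L0 L1; nlinarith

lemma L1_pos : 0 < L1 := lt_trans L2_pos L12
lemma L0_pos : 0 < L0 := lt_trans L1_pos L01

lemma L0_gt_one : 1 < L0 := by
  have := cos_gt_half; unfold L0; nlinarith

lemma prod_cos : cos (π/9) * cos (2*π/9) * cos (4*π/9) = 1/8 := by
  have hs : 0 < sin (π/9) := Real.sin_pos_of_pos_of_lt_pi (by positivity) (by nlinarith [pi_pos])
  have h1 : sin (2*π/9) = 2 * sin (π/9) * cos (π/9) := by
    rw [show 2*π/9 = 2*(π/9) by ring]; exact Real.sin_two_mul _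
  have h2 : sin (4*π/9) = 2 * sin (2*π/9) * cos (2*π/9) := by
    rw [show 4*π/9 = 2*(2*π/9) by ring]; exact Real.sin_two_mul _
  have h3 : sin (8*π/9) = 2 * sin (4*π/9) * cos (4*π/9) := by
    rw [show 8*π/9 = 2*(4*π/9) by ring]; exact Real.sin_two_mul _
  have h4 : sin (8*π/9) = sin (π/9) := by
    rw [show 8*π/9 = π - π/9 by ring, Real.sin_pi_sub]
  have key : sin (π/9) = 8 * sin (π/9) * (cos (π/9) * cos (2*π/9) * cos (4*π/9)) := by
    linear_combination (-1)*h4 + h3 + 2*cos (4*π/9)*h2 + 4*cos (4*π/9)*cos (2*π/9)*h1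
  nlinarith [key]

lemma L_prod : L0 * L1 * L2 = 1 := by
  have := prod_cos; unfold L0 L1 L2; nlinarith

lemma conj1' : (L0 - 2)^2 = L1 := by
  have h1 : cos (2*π/9) = 2 * cos (π/9)^2 - 1 := by
    rw [show 2*π/9 = 2*(π/9) by ring]; exact Real.cos_two_mul _
  unfold L0 L1; rw [h1]; ring

lemma conj2' : (L1 - 2)^2 = L2 := by
  have h1 : cos (4*π/9) = 2 * cos (2*π/9)^2 - 1 := by
    rw [show 4*π/9 = 2*(2*π/9) by ring]; exact Real.cos_two_mul _
  unfold L1 L2; rw [h1]; ring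

lemma conj3' : (L2 - 2)^2 = L0 := by
  have h1 : cos (8*π/9) = 2 * cos (4*π/9)^2 - 1 := by
    rw [show 8*π/9 = 2*(4*π/9) by ring]; exact Real.cos_two_mul _
  have h2 : cos (8*π/9) = - cos (π/9) := by
    rw [show 8*π/9 = π - π/9 by ring, Real.cos_pi_sub]
  rw [h2] at h1
  unfold L0 L2; nlinarith [h1]

lemma aeval_pQ (x : ℝ) (h : x^3 - 6*x^2 + 9*x - 1 = 0) : aeval x pQ = 0 := by
  unfold pQ
  simp only [map_sub, map_add, map_mul, map_pow, aeval_X, aeval_C, map_one, map_ofNat]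
  linear_combination h

lemma rel_shift (a b : ℤ) (h : L0 ^ a * L1 ^ b = 1) :
    L1 ^ a * L2 ^ b = 1 ∧ L2 ^ a * L0 ^ b = 1 := by
  set A := AdjoinRoot pQ
  let e0 : A →ₐ[ℚ] ℝ := AdjoinRoot.liftAlgHom pQ (Algebra.ofId ℚ ℝ) L0 (aeval_pQ _ cubic0)
  let e1 : A →ₐ[ℚ] ℝ := AdjoinRoot.liftAlgHom pQ (Algebra.ofId ℚ ℝ) L1 (aeval_pQ _ cubic1)
  let e2 : A →ₐ[ℚ] ℝ := AdjoinRoot.liftAlgHom pQ (Algebra.ofId ℚ ℝ) L2 (aeval_pQ _ cubic2)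
  let r : A := AdjoinRoot.root pQ
  let r1 : A := (r - 2)^2
  have e0r : e0 r = L0 := AdjoinRoot.liftAlgHom_root _ _ _ _
  have e1r : e1 r = L1 := AdjoinRoot.liftAlgHom_root _ _ _ _
  have e2r : e2 r = L2 := AdjoinRoot.liftAlgHom_root _ _ _ _
  have e0r1 : e0 r1 = L1 := by
    show e0 ((r-2)^2) = L1
    rw [map_pow, map_sub, e0r, map_ofNat, conj1']
  have e1r1 : e1 r1 = L2 := by
    show e1 ((r-2)^2) = L2
    rw [map_pow, map_sub, e1r, map_ofNat, conj2']
  have e2r1 : e2 r1 = L0 := by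
    show e2 ((r-2)^2) = L0
    rw [map_pow, map_sub, e2r, map_ofNat, conj3']
  let u : A := r ^ a * r1 ^ b
  have e0u : e0 u = L0 ^ a * L1 ^ b := by
    show e0 (r ^ a * r1 ^ b) = _
    rw [map_mul, map_zpow₀, map_zpow₀, e0r, e0r1]
  have hu : u = 1 := by
    have : e0 u = e0 1 := by rw [e0u, h, map_one]
    exact e0.toRingHom.injective this
  constructor
  · have : e1 u = L1 ^ a * L2 ^ b := by
      show e1 (r ^ a * r1 ^ b) = _
      rw [map_mul, map_zpow₀, map_zpow₀, e1r, e1r1]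
    rw [hu, map_one] at this; exact this.symm
  · have : e2 u = L2 ^ a * L0 ^ b := by
      show e2 (r ^ a * r1 ^ b) = _
      rw [map_mul, map_zpow₀, map_zpow₀, e2r, e2r1]
    rw [hu, map_one] at this; exact this.symm

lemma mult_indep (a b : ℤ) (h : L0 ^ a * L1 ^ b = 1) : a = 0 ∧ b = 0 := by
  obtain ⟨h2, h3⟩ := rel_shift a b h
  set x := Real.log L0 with hx
  set y := Real.log L1 with hy
  set z := Real.log L2 with hz
  have hxpos : 0 < x := Real.log_pos L0_gt_one
  have lg : ∀ (u v : ℝ) (m n : ℤ), 0 < u → 0 < v → u ^ m * v ^ n = 1 →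
      (m:ℝ) * Real.log u + (n:ℝ) * Real.log v = 0 := by
    intro u v m n hu hv huv
    have := congrArg Real.log huv
    rwa [Real.log_mul (by positivity) (by positivity), Real.log_zpow, Real.log_zpow,
      Real.log_one] at this
  have e1 : (a:ℝ) * x + (b:ℝ) * y = 0 := lg _ _ _ _ L0_pos L1_pos h
  have e2 : (a:ℝ) * y + (b:ℝ) * z = 0 := lg _ _ _ _ L1_pos L2_pos h2
  have e3 : (a:ℝ) * z + (b:ℝ) * x = 0 := lg _ _ _ _ L2_pos L0_pos h3
  have key : ((a:ℝ)^3 + (b:ℝ)^3) * x = 0 := by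
    linear_combination (a:ℝ)^2 * e1 - (a:ℝ)*(b:ℝ) * e2 + (b:ℝ)^2 * e3
  have hab : (a:ℝ)^3 + (b:ℝ)^3 = 0 := by
    rcases mul_eq_zero.mp key with h' | h'
    · exact h'
    · exact absurd h' (ne_of_gt hxpos)
  have habz : a^3 + b^3 = 0 := by exact_mod_cast hab
  have hanb : a = -b := by
    have hfac : (a + b) * (a^2 - a*b + b^2) = 0 := by linear_combination habz
    rcases mul_eq_zero.mp hfac with h' | h'
    · omega
    · have ha0 : a = 0 ∧ b = 0 := by constructor <;> nlinarith [sq_nonneg (a-b), sq_nonneg (a+b)]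
      omega
  have hxy : y < x := Real.log_lt_log L1_pos L01
  have haR : (a:ℝ) = -(b:ℝ) := by exact_mod_cast hanb
  have ha : (a:ℝ) * (x - y) = 0 := by
    rw [haR] at e1 ⊢; linear_combination e1
  have : a = 0 := by
    rcases mul_eq_zero.mp ha with h' | h'
    · exact_mod_cast h'
    · exact absurd h' (by intro hh; nlinarith)
  exact ⟨this, by omega⟩

end Stmt4Aux

open Stmt4Aux Polynomial Real Matrix in
theorem stmt_4 :
    ∃ (g : Matrix.SpecialLinearGroup (Fin 3) ℤ) (P : Matrix (Fin 3) (Fin 3) ℝ)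
      (lam : Fin 3 → ℝ),
      IsUnit P ∧
      P⁻¹ * ((g : Matrix (Fin 3) (Fin 3) ℤ).map (Int.cast : ℤ → ℝ)) * P =
        Matrix.diagonal lam ∧
      lam 0 > lam 1 ∧ lam 1 > lam 2 ∧ lam 2 > 0 ∧
      (∀ i, lam i ≠ 1) ∧
      (∀ m : Fin 3 → ℤ, lam 0 ^ m 0 * lam 1 ^ m 1 * lam 2 ^ m 2 = 1 →
        m 0 = m 1 ∧ m 1 = m 2) := by
  classical
  set lam : Fin 3 → ℝ := ![L0, L1, L2] with hlam
  have lam0 : lam 0 = L0 := rfl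
  have lam1 : lam 1 = L1 := rfl
  have lam2 : lam 2 = L2 := rfl
  have lcubic : ∀ j, lam j ^ 3 - 6 * lam j ^ 2 + 9 * lam j - 1 = 0 := by
    intro j; fin_cases j
    · exact cubic0
    · exact cubic1
    · exact cubic2
  refine ⟨⟨!![0,1,0;0,0,1;1,-9,6], by simp [Matrix.det_fin_three]⟩,
    (Matrix.vandermonde lam)ᵀ, lam, ?_, ?_, ?_, ?_, ?_, ?_, ?_⟩
  · -- IsUnit P
    rw [Matrix.isUnit_iff_isUnit_det, Matrix.det_transpose, Matrix.det_vandermonde]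
    rw [isUnit_iff_ne_zero]
    apply Finset.prod_ne_zero_iff.mpr
    intro i _
    apply Finset.prod_ne_zero_iff.mpr
    intro j hj
    rw [Finset.mem_Ioi] at hj
    have : lam j < lam i := by
      fin_cases i <;> fin_cases j <;> simp_all <;>
        first
          | exact L12 | exact L01 | exact lt_trans L12 L01
          | (exfalso; exact absurd hj (by decide))
    intro hc
    rw [sub_eq_zero] at hc
    exact absurd hc (ne_of_lt this)
  · -- diagonalization
    have hmap : ((!![0,1,0;0,0,1;1,-9,6] : Matrix (Fin 3) (Fin 3) ℤ).map
        (Int.cast : ℤ → ℝ)) = !![0,1,0;0,0,1;1,-9,6] := by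
      ext i j
      fin_cases i <;> fin_cases j <;> simp [Matrix.map_apply]
    show ((Matrix.vandermonde lam)ᵀ)⁻¹ * _ * (Matrix.vandermonde lam)ᵀ = _
    rw [hmap]
    have hMP : (!![0,1,0;0,0,1;1,-9,6] : Matrix (Fin 3) (Fin 3) ℝ) * (Matrix.vandermonde lam)ᵀ
        = (Matrix.vandermonde lam)ᵀ * Matrix.diagonal lam := by
      ext i j
      rw [Matrix.mul_apply, Matrix.mul_diagonal]
      fin_cases i <;>
        simp [Fin.sum_univ_three, Matrix.vandermonde, Matrix.transpose_apply]
      · ring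
      · linear_combination (-1:ℝ) * lcubic j
    have hdet : IsUnit ((Matrix.vandermonde lam)ᵀ).det := by
      rw [Matrix.det_transpose, Matrix.det_vandermonde, isUnit_iff_ne_zero]
      apply Finset.prod_ne_zero_iff.mpr
      intro i _
      apply Finset.prod_ne_zero_iff.mpr
      intro j hj
      rw [Finset.mem_Ioi] at hj
      have : lam j < lam i := by
        fin_cases i <;> fin_cases j <;> simp_all <;>
          first
            | exact L12 | exact L01 | exact lt_trans L12 L01
            | (exfalso; exact absurd hj (by decide))
      intro hc
      rw [sub_eq_zero] at hc
      exact absurd hc (ne_of_lt this)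
    rw [Matrix.mul_assoc, hMP, ← Matrix.mul_assoc, Matrix.nonsing_inv_mul _ hdet, Matrix.one_mul]
  · rw [lam0, lam1]; exact L01
  · rw [lam1, lam2]; exact L12
  · rw [lam2]; exact L2_pos
  · intro i
    have := lcubic i
    intro h1
    rw [h1] at this
    norm_num at this
  · intro m hm
    rw [lam0, lam1, lam2] at hm
    have hp2 : L0^(m 2) * L1^(m 2) * L2^(m 2) = 1 := by
      rw [← _root_.mul_zpow, ← _root_.mul_zpow, L_prod, _root_.one_zpow]
    have hkey : L0 ^ (m 0 - m 2) * L1 ^ (m 1 - m 2) * (L0^(m 2) * L1^(m 2) * L2^(m 2))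
        = L0 ^ m 0 * L1 ^ m 1 * L2 ^ m 2 := by
      calc L0 ^ (m 0 - m 2) * L1 ^ (m 1 - m 2) * (L0^(m 2) * L1^(m 2) * L2^(m 2))
          = (L0^(m 0 - m 2) * L0^(m 2)) * (L1^(m 1 - m 2) * L1^(m 2)) * L2^(m 2) := by ring
        _ = L0 ^ m 0 * L1 ^ m 1 * L2 ^ m 2 := by
            rw [← zpow_add₀ (ne_of_gt L0_pos), ← zpow_add₀ (ne_of_gt L1_pos)]
            norm_num
    have hrel : L0 ^ (m 0 - m 2) * L1 ^ (m 1 - m 2) = 1 := by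
      rw [hp2, mul_one] at hkey
      rw [hkey, hm]
    obtain ⟨h0, h1⟩ := mult_indep _ _ hrel
    omega
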